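/- Let (p_n) ∈ SVA₊ (i.e., liminf_n |P_{λ_n}/P_n − 1| > 0 for each λ > 0 with λ ≠ 1). Suppose the weighted geometric means w_n of a positive sequence (u_n) converge to a > 0. Then (u_n) converges to a if and only if liminf_{λ→1⁺} limsup_{n→∞} { |∏_{k=n+1}^{λ_n} (u_k/u_n)^{p_k}|* }^{1/(P_{λ_n} − P_n)} = 1. -/

import Mathlib

open Filter

noncomputable def mulAbs (x : ℝ) : ℝ := if 1 ≤ x then x else x⁻¹

noncomputable def Psum (p : ℕ → ℝ) (n : ℕ) : ℝ := ∑ k ∈ Finset.range (n + 1), p k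

noncomputable def wgm (p u : ℕ → ℝ) (n : ℕ) : ℝ :=
  (∏ k ∈ Finset.range (n + 1), u k ^ p k) ^ (1 / Psum p n)

def SVA (p : ℕ → ℝ) : Prop :=
  ∀ l : ℝ, 0 < l → l ≠ 1 →
    0 < liminf (fun n : ℕ => |Psum p ⌊l * (n : ℝ)⌋₊ / Psum p n - 1|) atTop

private lemma sum_Ioc' (f : ℕ → ℝ) {n m : ℕ} (h : n ≤ m) :
    ∑ k ∈ Finset.Ioc n m, f k
      = (∑ k ∈ Finset.range (m+1), f k) - ∑ k ∈ Finset.range (n+1), f k := by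
  rw [← Finset.Icc_add_one_left_eq_Ioc, ← Finset.Ico_add_one_right_eq_Icc, Finset.sum_Ico_eq_sub _ (by omega)]

private lemma psum_pos {p : ℕ → ℝ} (hp : ∀ n, 0 ≤ p n) (hp0 : 0 < p 0) (n : ℕ) :
    0 < Psum p n := by
  have : p 0 ≤ Psum p n :=
    Finset.single_le_sum (fun k _ => hp k) (Finset.mem_range.2 (Nat.succ_pos n))
  linarith

private lemma psum_mono {p : ℕ → ℝ} (hp : ∀ n, 0 ≤ p n) : Monotone (Psum p) := by
  intro n m h
  exact Finset.sum_le_sum_of_subset_of_nonneg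
    (Finset.range_subset_range.2 (by omega)) (fun k _ _ => hp k)

private lemma psum_sub (p : ℕ → ℝ) {n m : ℕ} (h : n ≤ m) :
    Psum p m - Psum p n = ∑ k ∈ Finset.Ioc n m, p k := (sum_Ioc' p h).symm

private lemma mulAbs_exp (x : ℝ) : mulAbs (Real.exp x) = Real.exp |x| := by
  unfold mulAbs
  rcases le_or_gt 0 x with hx | hx
  · rw [if_pos (Real.one_le_exp hx), abs_of_nonneg hx]
  · rw [if_neg (by simpa using Real.exp_lt_one_iff.mpr hx |>.not_ge), abs_of_neg hx,
      ← Real.exp_neg]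

private lemma prod_Ioc_eq_exp (p u : ℕ → ℝ) (hu : ∀ n, 0 < u n) (n m : ℕ) :
    ∏ k ∈ Finset.Ioc n m, (u k / u n) ^ p k
      = Real.exp (∑ k ∈ Finset.Ioc n m, p k * (Real.log (u k) - Real.log (u n))) := by
  rw [Real.exp_sum]
  refine Finset.prod_congr rfl (fun k _ => ?_)
  rw [Real.rpow_def_of_pos (div_pos (hu k) (hu n)), Real.log_div (hu k).ne' (hu n).ne',
    mul_comm]

private lemma expr_eq (p u : ℕ → ℝ) (hu : ∀ n, 0 < u n) (n m : ℕ) :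
    (mulAbs (∏ k ∈ Finset.Ioc n m, (u k / u n) ^ p k)) ^ (1 / (Psum p m - Psum p n))
      = Real.exp (|∑ k ∈ Finset.Ioc n m, p k * (Real.log (u k) - Real.log (u n))|
          / (Psum p m - Psum p n)) := by
  rw [prod_Ioc_eq_exp p u hu, mulAbs_exp, ← Real.exp_mul, mul_one_div]

private lemma log_wgm (p u : ℕ → ℝ) (hu : ∀ n, 0 < u n) (n : ℕ) :
    Real.log (wgm p u n)
      = (∑ k ∈ Finset.range (n+1), p k * Real.log (u k)) / Psum p n := by
  have : wgm p u n
      = Real.exp ((∑ k ∈ Finset.range (n+1), p k * Real.log (u k)) / Psum p n) := by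
    unfold wgm
    rw [show (∏ k ∈ Finset.range (n+1), u k ^ p k)
        = Real.exp (∑ k ∈ Finset.range (n+1), p k * Real.log (u k)) from ?_,
      ← Real.exp_mul, mul_one_div]
    rw [Real.exp_sum]
    exact Finset.prod_congr rfl fun k _ => by
      rw [Real.rpow_def_of_pos (hu k), mul_comm]
  rw [this, Real.log_exp]

private lemma limsup_exp_eq_one {h : ℕ → ℝ} (h0 : ∀ n, 0 ≤ h n)
    (hkey : ∀ ε : ℝ, 0 < ε → ∀ᶠ n in atTop, h n ≤ ε) :
    limsup (fun n => Real.exp (h n)) atTop = 1 := by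
  set g := fun n => Real.exp (h n) with hg
  have hb : IsBoundedUnder (· ≤ ·) atTop g :=
    isBoundedUnder_of_eventually_le ((hkey 1 one_pos).mono fun n hn => Real.exp_le_exp.2 hn)
  have hge : ∀ n, 1 ≤ g n := fun n => Real.one_le_exp (h0 n)
  have hco : IsCoboundedUnder (· ≤ ·) atTop g :=
    isCoboundedUnder_le_of_le atTop fun n => hge n
  have hupper : ∀ b : ℝ, 1 < b → limsup g atTop ≤ b := by
    intro b hb1
    refine limsup_le_of_le hco ?_
    exact (hkey (Real.log b) (Real.log_pos hb1)).mono fun n hn => by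
      calc g n ≤ Real.exp (Real.log b) := Real.exp_le_exp.2 hn
      _ = b := Real.exp_log (lt_trans one_pos hb1)
  have hlow : 1 ≤ limsup g atTop :=
    le_limsup_of_frequently_le (Eventually.frequently (Eventually.of_forall hge)) hb
  have : limsup g atTop ≤ 1 := by
    by_contra hc
    push_neg at hc
    have h2 := hupper ((1 + limsup g atTop)/2) (by linarith)
    linarith
  linarith

private lemma floor_ge {l : ℝ} (hl : 1 ≤ l) (n : ℕ) : n ≤ ⌊l * (n : ℝ)⌋₊ :=
  Nat.le_floor (le_mul_of_one_le_left (Nat.cast_nonneg n) hl)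

private lemma key_small (p u : ℕ → ℝ) (hp : ∀ n, 0 ≤ p n) {c : ℝ}
    (hs : Tendsto (fun n => Real.log (u n)) atTop (nhds c))
    {l : ℝ} (hl : 1 ≤ l) {ε : ℝ} (hε : 0 < ε) :
    ∀ᶠ n in atTop,
      |∑ k ∈ Finset.Ioc n ⌊l * (n : ℝ)⌋₊, p k * (Real.log (u k) - Real.log (u n))|
        / (Psum p ⌊l * (n : ℝ)⌋₊ - Psum p n) ≤ ε := by
  obtain ⟨N, hN⟩ := Metric.tendsto_atTop.1 hs (ε/2) (by linarith)
  filter_upwards [eventually_ge_atTop N] with n hn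
  set m := ⌊l * (n : ℝ)⌋₊ with hm
  have hnm : n ≤ m := floor_ge hl n
  set s := fun k => Real.log (u k) with hsdef
  have hD : Psum p m - Psum p n = ∑ k ∈ Finset.Ioc n m, p k := psum_sub p hnm
  have hDnn : 0 ≤ Psum p m - Psum p n := sub_nonneg.2 (psum_mono hp hnm)
  have hSb : |∑ k ∈ Finset.Ioc n m, p k * (s k - s n)| ≤ ε * (Psum p m - Psum p n) := by
    calc |∑ k ∈ Finset.Ioc n m, p k * (s k - s n)|
        ≤ ∑ k ∈ Finset.Ioc n m, |p k * (s k - s n)| := Finset.abs_sum_le_sum_abs _ _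
      _ ≤ ∑ k ∈ Finset.Ioc n m, p k * ε := by
          refine Finset.sum_le_sum fun k hk => ?_
          have hk' : n < k := (Finset.mem_Ioc.1 hk).1
          have h1 : dist (s k) c < ε/2 := hN k (by omega)
          have h2 : dist (s n) c < ε/2 := hN n hn
          rw [Real.dist_eq] at h1 h2
          rw [abs_mul, abs_of_nonneg (hp k)]
          have hle : |s k - s n| ≤ ε := by
            have h3 := abs_sub_le (s k) c (s n)
            have h4 : |c - s n| = |s n - c| := abs_sub_comm _ _
            linarith
          exact mul_le_mul_of_nonneg_left hle (hp k)
      _ = ε * (Psum p m - Psum p n) := by rw [hD, Finset.mul_sum]; exact Finset.sum_congr rfl fun k _ => mul_comm _ _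
  rcases eq_or_lt_of_le hDnn with hD0 | hD0
  · rw [← hD0, div_zero]; exact hε.le
  · exact (div_le_iff₀ hD0).2 (by linarith [hSb])

private lemma arith_main {eps eta A Pn Pm tmc tnc S : ℝ}
    (heps : 0 < eps) (heta : 0 < eta) (hPn : 0 < Pn) (hPm : Pn ≤ Pm)
    (hD : eta * Pn ≤ Pm - Pn)
    (htm : |tmc| < eps * eta / (4 * (2 + eta)))
    (htn : |tnc| < eps * eta / (4 * (2 + eta)))
    (hS : |S| < eps / 4 * (Pm - Pn))
    (habs : A * (Pm - Pn) ≤ Pm * |tmc| + Pn * |tnc| + |S|) : A < eps := by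
  set e2 : ℝ := eps * eta / (4 * (2 + eta)) with he2
  have hc : (0:ℝ) < 2 + eta := by linarith
  have hD0 : 0 < Pm - Pn := lt_of_lt_of_le (mul_pos heta hPn) hD
  have h1 : eta * (Pm + Pn) ≤ (2 + eta) * (Pm - Pn) := by nlinarith
  have h2 : (Pm + Pn) * e2 ≤ eps / 4 * (Pm - Pn) := by
    rw [he2, mul_div_assoc', div_le_iff₀ (by positivity)]
    nlinarith [mul_le_mul_of_nonneg_left h1 heps.le]
  have hb1 : Pm * |tmc| ≤ Pm * e2 :=
    mul_le_mul_of_nonneg_left htm.le (le_trans hPn.le hPm)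
  have hb2 : Pn * |tnc| ≤ Pn * e2 := mul_le_mul_of_nonneg_left htn.le hPn.le
  have h6 : A * (Pm - Pn) < eps / 2 * (Pm - Pn) := by nlinarith
  have h7 : A < eps / 2 := lt_of_mul_lt_mul_right h6 hD0.le
  linarith

theorem tauberian_right (p u : ℕ → ℝ) (a : ℝ)
    (hp : ∀ n, 0 ≤ p n) (hp0 : 0 < p 0)
    (hP : Tendsto (Psum p) atTop atTop) (hSVA : SVA p)
    (hu : ∀ n, 0 < u n) (ha : 0 < a)
    (hw : Tendsto (wgm p u) atTop (nhds a)) :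
    Tendsto u atTop (nhds a) ↔
      liminf (fun l : ℝ =>
          limsup (fun n : ℕ =>
              (mulAbs (∏ k ∈ Finset.Ioc n ⌊l * (n : ℝ)⌋₊, (u k / u n) ^ p k)) ^
                (1 / (Psum p ⌊l * (n : ℝ)⌋₊ - Psum p n))) atTop)
        (nhdsWithin 1 (Set.Ioi 1)) = 1 := by
  set s : ℕ → ℝ := fun n => Real.log (u n) with hsdef
  set c : ℝ := Real.log a with hcdef
  set L : ℝ → ℝ := fun l =>
    limsup (fun n : ℕ =>
        (mulAbs (∏ k ∈ Finset.Ioc n ⌊l * (n : ℝ)⌋₊, (u k / u n) ^ p k)) ^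
          (1 / (Psum p ⌊l * (n : ℝ)⌋₊ - Psum p n))) atTop with hLdef
  have hLexp : ∀ l : ℝ, 1 ≤ l → L l = limsup (fun n : ℕ =>
      Real.exp (|∑ k ∈ Finset.Ioc n ⌊l * (n : ℝ)⌋₊, p k * (s k - s n)|
        / (Psum p ⌊l * (n : ℝ)⌋₊ - Psum p n))) atTop := by
    intro l hl
    exact congrArg (fun f => limsup f atTop) (funext fun n => expr_eq p u hu n _)
  constructor
  · -- forward
    intro hua
    have hs : Tendsto s atTop (nhds c) := (Real.continuousAt_log ha.ne').tendsto.comp hua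
    have hL1 : ∀ l ∈ Set.Ioi (1:ℝ), L l = 1 := by
      intro l hl
      rw [hLexp l (le_of_lt hl)]
      refine limsup_exp_eq_one (fun n => div_nonneg (abs_nonneg _)
        (sub_nonneg.2 (psum_mono hp (floor_ge (le_of_lt hl) n)))) ?_
      intro ε hε
      exact key_small p u hp hs (le_of_lt hl) hε
    haveI : (nhdsWithin (1:ℝ) (Set.Ioi 1)).NeBot := nhdsGT_neBot 1
    calc liminf L (nhdsWithin 1 (Set.Ioi 1))
        = liminf (fun _ => (1:ℝ)) (nhdsWithin 1 (Set.Ioi 1)) :=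
          liminf_congr (eventually_mem_nhdsWithin.mono hL1)
      _ = 1 := liminf_const 1
  · -- reverse
    intro hcond
    have ht : Tendsto (fun n => Real.log (wgm p u n)) atTop (nhds c) :=
      (Real.continuousAt_log ha.ne').tendsto.comp hw
    suffices hlog : Tendsto s atTop (nhds c) by
      have h1 : Tendsto (fun n => Real.exp (s n)) atTop (nhds (Real.exp c)) :=
        (Real.continuous_exp.tendsto c).comp hlog
      have h2 : (fun n => Real.exp (s n)) = u := funext fun n => Real.exp_log (hu n)
      rw [h2, hcdef, Real.exp_log ha] at h1
      exact h1
    rw [Metric.tendsto_atTop]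
    intro ε hε
    -- extract a good l from the liminf hypothesis
    set SS := {x : ℝ | ∀ᶠ l in nhdsWithin (1:ℝ) (Set.Ioi 1), x ≤ L l} with hSSdef
    have hsup : sSup SS = 1 := by rw [← hcond, liminf_eq]
    have hne : SS.Nonempty := by
      by_contra hc
      rw [Set.not_nonempty_iff_eq_empty] at hc
      rw [hc, Real.sSup_empty] at hsup; norm_num at hsup
    have hbdd : BddAbove SS := by
      by_contra hc
      rw [Real.sSup_of_not_bddAbove hc] at hsup; norm_num at hsup
    obtain ⟨x, hxS, hx⟩ := exists_lt_of_lt_csSup hne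
      (show (1:ℝ)/2 < sSup SS by rw [hsup]; norm_num)
    have hxS' : ∀ᶠ l in nhdsWithin (1:ℝ) (Set.Ioi 1), x ≤ L l := hxS
    have hhalf : ∀ᶠ l in nhdsWithin (1:ℝ) (Set.Ioi 1), 1/2 ≤ L l :=
      hxS'.mono fun l hl => le_trans hx.le hl
    have hfreq : ∃ᶠ l in nhdsWithin (1:ℝ) (Set.Ioi 1), L l < Real.exp (ε/4) := by
      by_contra hc
      rw [not_frequently] at hc
      have hmem : Real.exp (ε/4) ∈ SS := hc.mono fun l hl => not_lt.1 hl
      have hle := le_csSup hbdd hmem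
      rw [hsup] at hle
      have hgt : (1:ℝ) < Real.exp (ε/4) := Real.one_lt_exp_iff.2 (by linarith)
      linarith
    obtain ⟨l, hlub, hlhalf, hl1⟩ :=
      (hfreq.and_eventually (hhalf.and eventually_mem_nhdsWithin)).exists
    rw [Set.mem_Ioi] at hl1
    have hlam : ∀ n : ℕ, n ≤ ⌊l * (n : ℝ)⌋₊ := floor_ge hl1.le
    set h : ℕ → ℝ := fun n =>
      |∑ k ∈ Finset.Ioc n ⌊l * (n : ℝ)⌋₊, p k * (s k - s n)|
        / (Psum p ⌊l * (n : ℝ)⌋₊ - Psum p n) with hhdef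
    have hLl : L l = limsup (fun n => Real.exp (h n)) atTop := hLexp l hl1.le
    have hgbdd : IsBoundedUnder (· ≤ ·) atTop (fun n => Real.exp (h n)) := by
      by_contra hc
      have hempty : {b : ℝ | ∀ᶠ n in atTop, Real.exp (h n) ≤ b} = ∅ := by
        ext b
        simp only [Set.mem_empty_iff_false, iff_false, Set.mem_setOf_eq]
        intro hb
        exact hc (isBoundedUnder_of_eventually_le hb)
      have hz : L l = 0 := by rw [hLl, limsup_eq, hempty, Real.sInf_empty]
      rw [hz] at hlhalf; norm_num at hlhalf
    have hev : ∀ᶠ n in atTop, h n < ε/4 :=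
      (eventually_lt_of_limsup_lt (by rw [← hLl]; exact hlub) hgbdd).mono
        fun n hn => Real.exp_lt_exp.1 hn
    -- SVA at l
    have hsva := hSVA l (lt_trans one_pos hl1) (ne_of_gt hl1)
    rw [liminf_eq] at hsva
    have hne' : {x : ℝ | ∀ᶠ n : ℕ in atTop,
        x ≤ |Psum p ⌊l * (n : ℝ)⌋₊ / Psum p n - 1|}.Nonempty := by
      by_contra hc
      rw [Set.not_nonempty_iff_eq_empty] at hc
      rw [hc, Real.sSup_empty] at hsva
      norm_num at hsva
    obtain ⟨η, hηS, hη⟩ := exists_lt_of_lt_csSup hne' hsva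
    -- the quantitative gap
    have hratio : ∀ n : ℕ, η ≤ |Psum p ⌊l * (n : ℝ)⌋₊ / Psum p n - 1| →
        η * Psum p n ≤ Psum p ⌊l * (n : ℝ)⌋₊ - Psum p n := by
      intro n hn
      have hPn := psum_pos hp hp0 n
      have hmon : Psum p n ≤ Psum p ⌊l * (n : ℝ)⌋₊ := psum_mono hp (hlam n)
      have h1 : (0:ℝ) ≤ Psum p ⌊l * (n : ℝ)⌋₊ / Psum p n - 1 := by
        rw [sub_nonneg, le_div_iff₀ hPn]; linarith
      rw [abs_of_nonneg h1] at hn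
      have h2 : Psum p ⌊l * (n : ℝ)⌋₊ / Psum p n * Psum p n = Psum p ⌊l * (n : ℝ)⌋₊ :=
        div_mul_cancel₀ _ hPn.ne'
      nlinarith [mul_le_mul_of_nonneg_right hn hPn.le]
    set ε2 : ℝ := ε * η / (4 * (2 + η)) with hε2
    have hε2pos : 0 < ε2 := div_pos (mul_pos hε hη) (by nlinarith)
    obtain ⟨N1, hN1⟩ := Metric.tendsto_atTop.1 ht ε2 hε2pos
    have hmain : ∀ᶠ n in atTop, |s n - c| < ε := by
      filter_upwards [hev, hηS, eventually_ge_atTop N1] with n hn1 hn2 hn3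
      set m := ⌊l * (n : ℝ)⌋₊ with hm
      have hnm : n ≤ m := hlam n
      set Pn := Psum p n with hPn'
      set Pm := Psum p m with hPm'
      have hPnpos : 0 < Pn := psum_pos hp hp0 n
      have hDge : η * Pn ≤ Pm - Pn := hratio n hn2
      have hD0 : 0 < Pm - Pn := lt_of_lt_of_le (mul_pos hη hPnpos) hDge
      set tn := Real.log (wgm p u n) with htn'
      set tm := Real.log (wgm p u m) with htm'
      have htnb : |tn - c| < ε2 := by
        have := hN1 n hn3; rwa [Real.dist_eq] at this
      have htmb : |tm - c| < ε2 := by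
        have := hN1 m (le_trans hn3 hnm); rwa [Real.dist_eq] at this
      -- sum identity
      have eT : ∀ j : ℕ, (∑ k ∈ Finset.range (j+1), p k * s k)
          = Psum p j * Real.log (wgm p u j) := by
        intro j
        rw [log_wgm p u hu j, mul_div_cancel₀ _ (psum_pos hp hp0 j).ne']
      have hSid : (∑ k ∈ Finset.Ioc n m, p k * (s k - s n))
          = (Pm * tm - Pn * tn) - (Pm - Pn) * s n := by
        have e1 : (∑ k ∈ Finset.Ioc n m, p k * (s k - s n))
            = (∑ k ∈ Finset.Ioc n m, p k * s k) - (∑ k ∈ Finset.Ioc n m, p k) * s n := by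
          rw [Finset.sum_mul]
          rw [← Finset.sum_sub_distrib]
          exact Finset.sum_congr rfl fun k _ => by ring
        rw [e1, sum_Ioc' (fun k => p k * s k) hnm, eT n, eT m, ← psum_sub p hnm]
      -- from h n < ε/4
      have hSb : |∑ k ∈ Finset.Ioc n m, p k * (s k - s n)| < ε/4 * (Pm - Pn) := by
        have := hn1
        rw [hhdef] at this
        simp only [← hm, ← hPn', ← hPm'] at this
        exact (div_lt_iff₀ hD0).1 this
      -- triangle inequality
      have habs : |s n - c| * (Pm - Pn)
          ≤ Pm * |tm - c| + Pn * |tn - c|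
            + |∑ k ∈ Finset.Ioc n m, p k * (s k - s n)| := by
        have e2 : (s n - c) * (Pm - Pn)
            = (Pm * (tm - c) - Pn * (tn - c))
              - ((Pm * tm - Pn * tn) - (Pm - Pn) * s n) := by ring
        calc |s n - c| * (Pm - Pn) = |(s n - c) * (Pm - Pn)| := by
              rw [abs_mul, abs_of_pos hD0]
          _ = |(Pm * (tm - c) - Pn * (tn - c))
              - ((Pm * tm - Pn * tn) - (Pm - Pn) * s n)| := by rw [e2]
          _ ≤ |Pm * (tm - c) - Pn * (tn - c)|
              + |(Pm * tm - Pn * tn) - (Pm - Pn) * s n| := abs_sub _ _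
          _ ≤ (|Pm * (tm - c)| + |Pn * (tn - c)|)
              + |(Pm * tm - Pn * tn) - (Pm - Pn) * s n| := by
                linarith [abs_sub (Pm * (tm - c)) (Pn * (tn - c))]
          _ = Pm * |tm - c| + Pn * |tn - c|
              + |(Pm * tm - Pn * tn) - (Pm - Pn) * s n| := by
                rw [abs_mul, abs_mul, abs_of_pos (lt_of_lt_of_le hPnpos (psum_mono hp hnm)),
                  abs_of_pos hPnpos]
          _ = _ := by rw [← hSid]
      -- combine
      exact arith_main hε hη hPnpos (psum_mono hp hnm) hDge
        (by rw [← hε2]; exact htmb) (by rw [← hε2]; exact htnb) hSb habs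
    obtain ⟨N, hN⟩ := eventually_atTop.1 hmain
    exact ⟨N, fun n hn => by rw [Real.dist_eq]; exact hN n hn⟩
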